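/- Let W₁, …, W_L be matrices with W_j ∈ ℝ^{d_j × d_{j-1}} evolving by the deep linear gradient flow W_j' = -A_j^T G B_j^T, where A_j = W_L ⋯ W_{j+1}, B_j = W_{j-1} ⋯ W_1 (empty products are identities) and G = G(t) is continuous. Then for each j = 1, …, L-1 the adjacent imbalance D_j = W_j W_j^T - W_{j+1}^T W_{j+1} is constant in time. -/

import Mathlib

open Matrix

/-- **Deep linear gradient flow preserves adjacent imbalances.**
Layers `W j : d(j+1) × d(j)` (0-indexed, `j < L`) evolve by `W_j' = -A_jᵀ G B_jᵀ`,
where `A` and `B` are the partial products above and below layer `j`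
(characterized by their defining recursions, with empty products the identity)
and `G(t)` is continuous.  Then every adjacent imbalance
`D_j = W_j W_jᵀ - W_{j+1}ᵀ W_{j+1}` is constant in time. -/
theorem deep_linear_flow_preserves_adjacent_imbalances
    (d : ℕ → ℕ) (L : ℕ)
    (W : ℝ → ∀ j : ℕ, Matrix (Fin (d (j + 1))) (Fin (d j)) ℝ)
    (A : ℝ → ∀ j : ℕ, Matrix (Fin (d L)) (Fin (d j)) ℝ)
    (B : ℝ → ∀ j : ℕ, Matrix (Fin (d j)) (Fin (d 0)) ℝ)
    (G : ℝ → Matrix (Fin (d L)) (Fin (d 0)) ℝ)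
    (hG : ∀ i k, Continuous (fun t => G t i k))
    (hAtop : ∀ t, A t L = 1)
    (hArec : ∀ t, ∀ j < L, A t j = A t (j + 1) * W t j)
    (hBbot : ∀ t, B t 0 = 1)
    (hBrec : ∀ t, ∀ j < L, B t (j + 1) = W t j * B t j)
    (hW : ∀ t, ∀ j < L, ∀ i k,
      HasDerivAt (fun s => W s j i k)
        ((-((A t (j + 1))ᵀ * G t * (B t j)ᵀ)) i k) t) :
    ∀ j : ℕ, j + 1 < L → ∀ t : ℝ,
      W t j * (W t j)ᵀ - (W t (j + 1))ᵀ * W t (j + 1)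
        = W 0 j * (W 0 j)ᵀ - (W 0 (j + 1))ᵀ * W 0 (j + 1) := by
  intro j hj t
  have hj1 : j < L := by omega
  -- derivative matrices
  set X : ℝ → ∀ j : ℕ, Matrix (Fin (d (j + 1))) (Fin (d j)) ℝ :=
    fun s j => -((A s (j + 1))ᵀ * G s * (B s j)ᵀ) with hX
  ext i k
  set f : ℝ → ℝ := fun s =>
    (∑ m, W s j i m * W s j k m) - ∑ m, W s (j + 1) m i * W s (j + 1) m k with hf
  -- the key matrix identity making the derivative vanish
  have key : ∀ s : ℝ,
      X s j * (W s j)ᵀ + W s j * (X s j)ᵀ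
        = (X s (j + 1))ᵀ * W s (j + 1) + (W s (j + 1))ᵀ * X s (j + 1) := by
    intro s
    have hA : A s (j + 1) = A s (j + 2) * W s (j + 1) := hArec s (j + 1) hj
    have hB : B s (j + 1) = W s j * B s j := hBrec s j hj1
    simp only [hX, hA, hB, Matrix.transpose_mul, Matrix.transpose_neg,
      Matrix.neg_mul, Matrix.mul_neg, Matrix.mul_assoc]
    abel
  have hderiv : ∀ s : ℝ, HasDerivAt f 0 s := by
    intro s
    have h1 : HasDerivAt f
        ((∑ m, (X s j i m * W s j k m + W s j i m * X s j k m)) -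
          ∑ m, (X s (j + 1) m i * W s (j + 1) m k +
            W s (j + 1) m i * X s (j + 1) m k)) s := by
      apply HasDerivAt.sub
      · exact HasDerivAt.fun_sum fun m _ =>
          ((hW s j hj1 i m).mul (hW s j hj1 k m))
      · exact HasDerivAt.fun_sum fun m _ =>
          ((hW s (j + 1) hj m i).mul (hW s (j + 1) hj m k))
    have hzero :
        ((∑ m, (X s j i m * W s j k m + W s j i m * X s j k m)) -
          ∑ m, (X s (j + 1) m i * W s (j + 1) m k +
            W s (j + 1) m i * X s (j + 1) m k)) = 0 := by
      have := congrFun (congrFun (key s) i) k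
      simp only [Matrix.add_apply, Matrix.mul_apply, Matrix.transpose_apply,
        ← Finset.sum_add_distrib] at this
      rw [sub_eq_zero]
      rw [← this]
    rw [hzero] at h1
    exact h1
  have hconst : f t = f 0 :=
    is_const_of_deriv_eq_zero (fun s => (hderiv s).differentiableAt)
      (fun s => (hderiv s).deriv) t 0
  simpa only [Matrix.sub_apply, Matrix.mul_apply, Matrix.transpose_apply, hf]
    using hconst
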